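/- Let K ⊆ ℝ² be a centrally symmetric convex body, and let v, w ∈ ∂K be linearly independent with |det(x, w)| ≤ |det(v, w)| and |det(x, v)| ≤ |det(v, w)| for all x ∈ K. Set Q₁ := {a·v + b·w : a, b ≥ 0} and Q₂ := {a·(−v) + b·w : a, b ≥ 0}. If p ∈ ∂K ∩ Q₁ with p ≠ v and p ≠ w, and u ∈ ℝ² is a nonzero vector such that the line through p with direction u supports K (i.e., det(x, u) ≤ det(p, u) for all x ∈ K, or det(x, u) ≥ det(p, u) for all x ∈ K), then u ∈ Q₂ ∪ (−Q₂). -/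

import Mathlib

set_option maxHeartbeats 1000000

/-- The standard determinant form on ℝ². -/
def det2 (x y : ℝ × ℝ) : ℝ := x.1 * y.2 - x.2 * y.1

lemma det2_ne_zero_of_linearIndependent {v w : ℝ × ℝ}
    (hind : LinearIndependent ℝ ![v, w]) : det2 v w ≠ 0 := by
  intro h
  simp only [det2] at h
  have hpair := LinearIndependent.pair_iff.1 hind
  rcases eq_or_ne v 0 with hv0 | hv0
  · have := (hpair 1 0 (by simp [hv0])).1
    norm_num at this
  · apply hv0
    have h1 := hpair w.2 (-v.2)
    have h2 := hpair w.1 (-v.1)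
    have e1 : w.2 • v + (-v.2) • w = 0 := by
      apply Prod.ext <;> simp [Prod.smul_def] <;> linarith
    have e2 : w.1 • v + (-v.1) • w = 0 := by
      apply Prod.ext <;> simp [Prod.smul_def] <;> linarith
    have hv2 : v.2 = 0 := by have := (h1 e1).2; linarith [neg_eq_zero.1 this]
    have hv1 : v.1 = 0 := by have := (h2 e2).2; linarith [neg_eq_zero.1 this]
    exact Prod.ext hv1 hv2

/-- If `v, w` are conjugate directions of a centrally symmetric convex body `K`
in the plane, then the direction of any supporting line of `K` at a point of the
first-quadrant arc (other than `v, w`) lies in the second quadrant. -/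
theorem stmt_1 (K : Set (ℝ × ℝ)) (hKc : IsCompact K) (hKconv : Convex ℝ K)
    (hKint : (interior K).Nonempty) (hKsymm : K = -K)
    (v w : ℝ × ℝ) (hv : v ∈ frontier K) (hw : w ∈ frontier K)
    (hind : LinearIndependent ℝ ![v, w])
    (hconj : ∀ x ∈ K, |det2 x w| ≤ |det2 v w| ∧ |det2 x v| ≤ |det2 v w|)
    (Q₁ Q₂ : Set (ℝ × ℝ))
    (hQ₁ : Q₁ = {p | ∃ a b : ℝ, 0 ≤ a ∧ 0 ≤ b ∧ p = a • v + b • w})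
    (hQ₂ : Q₂ = {p | ∃ a b : ℝ, 0 ≤ a ∧ 0 ≤ b ∧ p = a • (-v) + b • w})
    (p : ℝ × ℝ) (hp : p ∈ frontier K ∩ Q₁) (hpv : p ≠ v) (hpw : p ≠ w)
    (u : ℝ × ℝ) (hu : u ≠ 0)
    (hsupp : (∀ x ∈ K, det2 x u ≤ det2 p u) ∨ (∀ x ∈ K, det2 p u ≤ det2 x u)) :
    u ∈ Q₂ ∪ -Q₂ := by
  have hKclosed : IsClosed K := hKc.isClosed
  have hfr : frontier K ⊆ K := hKclosed.frontier_subset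
  have hvK : v ∈ K := hfr hv
  have hwK : w ∈ K := hfr hw
  have hnvK : -v ∈ K := by rw [hKsymm]; simpa using hvK
  have hnwK : -w ∈ K := by rw [hKsymm]; simpa using hwK
  obtain ⟨hpF, hpQ⟩ := hp
  have hpK : p ∈ K := hfr hpF
  have hD : det2 v w ≠ 0 := det2_ne_zero_of_linearIndependent hind
  have hDpos : 0 < |det2 v w| := abs_pos.2 hD
  have hE : v.1 * w.2 - v.2 * w.1 ≠ 0 := by simpa [det2] using hD
  -- 0 ∈ interior K
  obtain ⟨z, hz⟩ := hKint
  have hsubneg : -interior K ⊆ K := by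
    intro y hy
    rw [Set.mem_neg] at hy
    rw [hKsymm, Set.mem_neg]
    exact interior_subset hy
  have hnz : -z ∈ interior K :=
    interior_maximal hsubneg isOpen_interior.neg (Set.neg_mem_neg.2 hz)
  have h0 : (0 : ℝ × ℝ) ∈ interior K := by
    have := hKconv.combo_interior_self_mem_interior hnz (interior_subset hz)
      (by norm_num : (0:ℝ) < 1/2) (by norm_num : (0:ℝ) ≤ 1/2) (by norm_num)
    simpa [smul_add, ← add_smul] using this
  have hpNI : p ∉ interior K := by
    have := hKclosed.frontier_eq ▸ hpF
    exact this.2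
  -- decompose p
  rw [hQ₁] at hpQ
  obtain ⟨a, b, ha0, hb0, hpab⟩ := hpQ
  have hint : ∀ (c : ℝ) (x : ℝ × ℝ), x ∈ K → 0 ≤ c → c < 1 → c • x ∈ interior K := by
    intro c x hx hc0 hc1
    have := hKconv.combo_interior_self_mem_interior h0 hx
      (by linarith : (0:ℝ) < 1 - c) hc0 (by ring)
    simpa using this
  have hdet_pw : det2 p w = a * det2 v w := by
    simp only [hpab, det2, Prod.fst_add, Prod.snd_add, Prod.smul_fst, Prod.smul_snd,
      smul_eq_mul]; ring
  have hdet_pv : det2 p v = -(b * det2 v w) := by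
    simp only [hpab, det2, Prod.fst_add, Prod.snd_add, Prod.smul_fst, Prod.smul_snd,
      smul_eq_mul]; ring
  have ha1 : a ≤ 1 := by
    have := (hconj p hpK).1
    rw [hdet_pw, abs_mul, abs_of_nonneg ha0] at this
    nlinarith
  have hb1 : b ≤ 1 := by
    have := (hconj p hpK).2
    rw [hdet_pv, abs_neg, abs_mul, abs_of_nonneg hb0] at this
    nlinarith
  have hapos : 0 < a := by
    rcases lt_or_eq_of_le ha0 with h | h
    · exact h
    · exfalso
      have hpb : p = b • w := by simp [hpab, ← h]
      rcases lt_or_eq_of_le hb1 with hblt | hbeq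
      · exact hpNI (hpb ▸ hint b w hwK hb0 hblt)
      · exact hpw (by rw [hpb, hbeq, one_smul])
  have hbpos : 0 < b := by
    rcases lt_or_eq_of_le hb0 with h | h
    · exact h
    · exfalso
      have hpa : p = a • v := by simp [hpab, ← h]
      rcases lt_or_eq_of_le ha1 with halt | haeq
      · exact hpNI (hpa ▸ hint a v hvK ha0 halt)
      · exact hpv (by rw [hpa, haeq, one_smul])
  -- decompose u
  obtain ⟨α, β, huαβ⟩ : ∃ α β : ℝ, u = α • v + β • w := by
    refine ⟨(u.1 * w.2 - u.2 * w.1) / (v.1 * w.2 - v.2 * w.1),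
      (v.1 * u.2 - v.2 * u.1) / (v.1 * w.2 - v.2 * w.1), ?_⟩
    apply Prod.ext <;>
      · simp only [Prod.fst_add, Prod.snd_add, Prod.smul_fst, Prod.smul_snd, smul_eq_mul]
        rw [div_mul_eq_mul_div, div_mul_eq_mul_div, ← add_div, eq_div_iff hE]
        ring
  have hdvu : det2 v u = β * det2 v w := by
    simp only [huαβ, det2, Prod.fst_add, Prod.snd_add, Prod.smul_fst, Prod.smul_snd,
      smul_eq_mul]; ring
  have hdwu : det2 w u = -(α * det2 v w) := by
    simp only [huαβ, det2, Prod.fst_add, Prod.snd_add, Prod.smul_fst, Prod.smul_snd,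
      smul_eq_mul]; ring
  have hdpu : det2 p u = (a * β - b * α) * det2 v w := by
    simp only [hpab, huαβ, det2, Prod.fst_add, Prod.snd_add, Prod.smul_fst, Prod.smul_snd,
      smul_eq_mul]; ring
  have hneg : ∀ x : ℝ × ℝ, det2 (-x) u = -det2 x u := by
    intro x; simp [det2]; ring
  have hkey : |det2 v u| ≤ |det2 p u| ∧ |det2 w u| ≤ |det2 p u| := by
    rcases hsupp with h | h
    · constructor
      · have h1 := h v hvK
        have h2 := h (-v) hnvK
        rw [hneg] at h2
        rw [abs_le]
        constructor <;> linarith [le_abs_self (det2 p u)]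
      · have h1 := h w hwK
        have h2 := h (-w) hnwK
        rw [hneg] at h2
        rw [abs_le]
        constructor <;> linarith [le_abs_self (det2 p u)]
    · constructor
      · have h1 := h v hvK
        have h2 := h (-v) hnvK
        rw [hneg] at h2
        rw [abs_le]
        constructor <;> linarith [neg_abs_le (det2 p u)]
      · have h1 := h w hwK
        have h2 := h (-w) hnwK
        rw [hneg] at h2
        rw [abs_le]
        constructor <;> linarith [neg_abs_le (det2 p u)]
  have hβle : |β| ≤ |a * β - b * α| := by
    have := hkey.1
    rw [hdvu, hdpu, abs_mul, abs_mul] at this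
    exact le_of_mul_le_mul_right this hDpos
  have hαle : |α| ≤ |a * β - b * α| := by
    have := hkey.2
    rw [hdwu, hdpu, abs_neg, abs_mul, abs_mul] at this
    exact le_of_mul_le_mul_right this hDpos
  -- α * β ≤ 0
  have hprod : α * β ≤ 0 := by
    by_contra hc
    push_neg at hc
    rcases mul_pos_iff.1 hc with ⟨hα, hβ⟩ | ⟨hα, hβ⟩
    · -- α > 0, β > 0
      rw [abs_of_pos hα] at hαle
      rw [abs_of_pos hβ] at hβle
      rcases abs_cases (a * β - b * α) with ⟨he, _⟩ | ⟨he, _⟩ <;> rw [he] at hαle hβle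
      · nlinarith [mul_pos hbpos hα, mul_nonneg (sub_nonneg.2 ha1) hβ.le]
      · nlinarith [mul_pos hapos hβ, mul_nonneg (sub_nonneg.2 hb1) hα.le]
    · -- α < 0, β < 0
      rw [abs_of_neg hα] at hαle
      rw [abs_of_neg hβ] at hβle
      rcases abs_cases (a * β - b * α) with ⟨he, _⟩ | ⟨he, _⟩ <;> rw [he] at hαle hβle
      · nlinarith [mul_neg_of_pos_of_neg hapos hβ,
          mul_nonneg (sub_nonneg.2 hb1) (neg_nonneg.2 hα.le)]
      · nlinarith [mul_neg_of_pos_of_neg hbpos hα,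
          mul_nonneg (sub_nonneg.2 ha1) (neg_nonneg.2 hβ.le)]
  -- conclude
  have hmemQ₂ : ∀ s t : ℝ, 0 ≤ s → 0 ≤ t → s • (-v) + t • w ∈ Q₂ := by
    intro s t hs ht; rw [hQ₂]; exact ⟨s, t, hs, ht, rfl⟩
  have heq1 : ∀ s t : ℝ, s • (-v) + t • w = (-s) • v + t • w := by
    intro s t; apply Prod.ext <;> simp <;> ring
  rcases le_total α 0 with hα | hα <;> rcases le_total β 0 with hβ | hβ
  · rcases eq_or_lt_of_le hβ with hβ0 | hβ0
    · left
      have : u = (-α) • (-v) + (0:ℝ) • w := by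
        rw [heq1, huαβ]; apply Prod.ext <;> simp [hβ0]
      rw [this]
      exact hmemQ₂ _ _ (by linarith) le_rfl
    · have hα0 : α = 0 := by nlinarith
      right
      rw [Set.mem_neg]
      have : -u = (0:ℝ) • (-v) + (-β) • w := by
        rw [heq1, huαβ]; apply Prod.ext <;> simp [hα0] <;> ring
      rw [this]
      exact hmemQ₂ _ _ le_rfl (by linarith)
  · left
    have : u = (-α) • (-v) + β • w := by
      rw [heq1, huαβ]; apply Prod.ext <;> simp <;> ring
    rw [this]
    exact hmemQ₂ _ _ (by linarith) hβ
  · right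
    rw [Set.mem_neg]
    have : -u = α • (-v) + (-β) • w := by
      rw [heq1, huαβ]; apply Prod.ext <;> simp <;> ring
    rw [this]
    exact hmemQ₂ _ _ hα (by linarith)
  · rcases eq_or_lt_of_le hα with hα0 | hα0
    · left
      have : u = (0:ℝ) • (-v) + β • w := by
        rw [heq1, huαβ]; apply Prod.ext <;> simp [← hα0] <;> ring
      rw [this]
      exact hmemQ₂ _ _ le_rfl hβ
    · have hβ0 : β = 0 := by nlinarith
      right
      rw [Set.mem_neg]
      have : -u = α • (-v) + (0:ℝ) • w := by
        rw [heq1, huαβ]; apply Prod.ext <;> simp [hβ0] <;> ring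
      rw [this]
      exact hmemQ₂ _ _ hα le_rfl
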